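/- Let ℓ = (ℓ₁,…,ℓₙ) be ordered generic, let ℓ' = (ℓ₂,…,ℓ_{n−1}, ℓₙ+ℓ₁), and let ε > 0 be small enough that shortness with respect to ℓ_{ℓ₁−ε} = (ε, ℓ₂,…,ℓ_{n−1}, ℓₙ+ℓ₁−ε) agrees with shortness determined by ℓ'. Then Ṡ(ℓ_{ℓ₁−ε}) ⊆ Ṡ(ℓ), and the set difference Ṡ(ℓ) − Ṡ(ℓ_{ℓ₁−ε}) is in bijection with the set of subsets J ⊆ {2,…,n−1} such that J is short with respect to ℓ and J ∪ {1} is long with respect to ℓ (the bijection sending J to its complement {2,…,n−1} − J). -/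

import Mathlib

open Finset

/-- The sum of `ℓ` over `J` is less than the sum over the complement in `{1,…,n}`. -/
def Short (n : ℕ) (ℓ : ℕ → ℝ) (J : Finset ℕ) : Prop :=
  ∑ j ∈ J, ℓ j < ∑ j ∈ Finset.Icc 1 n \ J, ℓ j

/-- `J` is long iff its complement in `{1,…,n}` is short. -/
def Long (n : ℕ) (ℓ : ℕ → ℝ) (J : Finset ℕ) : Prop :=
  Short n ℓ (Finset.Icc 1 n \ J)

/-- All entries positive. -/
def LengthVec (n : ℕ) (ℓ : ℕ → ℝ) : Prop := ∀ i ∈ Finset.Icc 1 n, 0 < ℓ i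

/-- `ℓ₁ ≤ … ≤ ℓₙ`. -/
def OrderedVec (n : ℕ) (ℓ : ℕ → ℝ) : Prop :=
  ∀ i j : ℕ, 1 ≤ i → i ≤ j → j ≤ n → ℓ i ≤ ℓ j

/-- No subset has sum equal to the sum of its complement. -/
def Generic (n : ℕ) (ℓ : ℕ → ℝ) : Prop :=
  ∀ J ⊆ Finset.Icc 1 n, ∑ j ∈ J, ℓ j ≠ ∑ j ∈ Finset.Icc 1 n \ J, ℓ j

/-- Dominance order: an injective order-preserving map `φ : J₁ → J₂` with `x ≤ φ x`. -/
def DomLe (J₁ J₂ : Finset ℕ) : Prop :=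
  ∃ φ : ℕ → ℕ, Set.InjOn φ ↑J₁ ∧ (∀ x ∈ J₁, φ x ∈ J₂) ∧
    (∀ x ∈ J₁, ∀ y ∈ J₁, x < y → φ x < φ y) ∧ ∀ x ∈ J₁, x ≤ φ x

/-- `Ṡ_k(ℓ)`: subsets `J ⊆ {1,…,n−1}` of cardinality `k` with `J ∪ {n}` short. -/
def SdotSet (n : ℕ) (ℓ : ℕ → ℝ) (k : ℕ) : Set (Finset ℕ) :=
  {J | J ⊆ Finset.Icc 1 (n-1) ∧ J.card = k ∧ Short n ℓ (insert n J)}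

/-- `Ṡ(ℓ)`: subsets `J ⊆ {1,…,n−1}` with `J ∪ {n}` short. -/
def Sdot (n : ℕ) (ℓ : ℕ → ℝ) : Set (Finset ℕ) :=
  {J | J ⊆ Finset.Icc 1 (n-1) ∧ Short n ℓ (insert n J)}

/-- Special: `Ṡ_{n−3}(ℓ) = ∅ ≠ Ṡ_{n−4}(ℓ)`. -/
def SpecialVec (n : ℕ) (ℓ : ℕ → ℝ) : Prop :=
  SdotSet n ℓ (n-3) = ∅ ∧ SdotSet n ℓ (n-4) ≠ ∅

/-- `T` is the type of `ℓ`: the minimal three-element long subset of `{1,…,n−1}`. -/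
def IsType (n : ℕ) (ℓ : ℕ → ℝ) (T : Finset ℕ) : Prop :=
  T ⊆ Finset.Icc 1 (n-1) ∧ T.card = 3 ∧ Long n ℓ T ∧
    ∀ T' ⊆ Finset.Icc 1 (n-1), T'.card = 3 → Long n ℓ T' → DomLe T T'

private lemma short_iff' (n : ℕ) (f : ℕ → ℝ) (J : Finset ℕ) (h : J ⊆ Finset.Icc 1 n) :
    Short n f J ↔ ∑ j ∈ J, f j + ∑ j ∈ J, f j < ∑ j ∈ Finset.Icc 1 n, f j := by
  unfold Short
  rw [Finset.sum_sdiff_eq_sub h]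
  constructor <;> intro <;> linarith

/-- With ℓ_{ℓ₁−ε} = (ε, ℓ₂,…,ℓ_{n−1}, ℓₙ+ℓ₁−ε), one has
Ṡ(ℓ_{ℓ₁−ε}) ⊆ Ṡ(ℓ), and Ṡ(ℓ) − Ṡ(ℓ_{ℓ₁−ε}) is in bijection (via complement in
{2,…,n−1}) with the subsets J ⊆ {2,…,n−1} short w.r.t. ℓ with J ∪ {1} long. -/
theorem sdot_difference (n : ℕ) (ℓ : ℕ → ℝ) (ε : ℝ) (hn : 4 ≤ n)
    (hpos : LengthVec n ℓ) (hord : OrderedVec n ℓ) (hgen : Generic n ℓ)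
    (hε0 : 0 < ε) (hε1 : 2*ε < ℓ 1)
    -- L is the length vector ℓ_{ℓ₁−ε}
    (L : ℕ → ℝ)
    (hL : L = fun j => if j = 1 then ε else if j = n then ℓ n + ℓ 1 - ε else ℓ j)
    -- ε is small enough: shortness w.r.t. L agrees with shortness determined by
    -- ℓ' = (ℓ₂,…,ℓ_{n−1},ℓₙ+ℓ₁)
    (hεsmall : ∀ J ⊆ Finset.Icc 1 n, Short n L J ↔
      Short (n-1)
        (fun j => if j = n-1 then ℓ n + ℓ 1 else ℓ (j+1))
        ((J.erase 1).image (fun i => i - 1))) :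
    Sdot n L ⊆ Sdot n ℓ ∧
    (∀ J ⊆ Finset.Icc 1 (n-1),
      ((Short n ℓ (insert n J) ∧ ¬ Short n L (insert n J)) ↔
        (J ⊆ Finset.Icc 2 (n-1) ∧ Short n ℓ (Finset.Icc 2 (n-1) \ J) ∧
          Long n ℓ (insert 1 (Finset.Icc 2 (n-1) \ J))))) := by
  have hn1 : (1:ℕ) ≠ n := by omega
  have hL1 : L 1 = ε := by rw [hL]; simp
  have hLn : L n = ℓ n + ℓ 1 - ε := by rw [hL]; simp [hn1.symm]
  have hLmid : ∀ j : ℕ, j ≠ 1 → j ≠ n → L j = ℓ j := by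
    intro j h1 h2; rw [hL]; simp [h1, h2]
  have hIcc : Finset.Icc 1 n = insert 1 (insert n (Finset.Icc 2 (n-1))) := by
    ext j; simp only [Finset.mem_Icc, Finset.mem_insert]; omega
  have h1notin : (1:ℕ) ∉ insert n (Finset.Icc 2 (n-1)) := by
    simp only [Finset.mem_insert, Finset.mem_Icc]; omega
  have hnnotin : n ∉ Finset.Icc 2 (n-1) := by
    simp only [Finset.mem_Icc]; omega
  have sum_split : ∀ f : ℕ → ℝ, ∑ j ∈ Finset.Icc 1 n, f j
      = f 1 + f n + ∑ j ∈ Finset.Icc 2 (n-1), f j := by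
    intro f
    rw [hIcc, Finset.sum_insert h1notin, Finset.sum_insert hnnotin]; ring
  have hLtot : ∑ j ∈ Finset.Icc 1 n, L j = ∑ j ∈ Finset.Icc 1 n, ℓ j := by
    rw [sum_split L, sum_split ℓ, hL1, hLn,
      Finset.sum_congr rfl (fun j hj => hLmid j (by simp only [Finset.mem_Icc] at hj; omega)
        (by simp only [Finset.mem_Icc] at hj; omega))]
    ring
  -- generic facts about J ⊆ Icc 1 (n-1)
  have key : ∀ J : Finset ℕ, J ⊆ Finset.Icc 1 (n-1) → n ∉ J ∧ insert n J ⊆ Finset.Icc 1 n := by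
    intro J hJ
    have hJ' : ∀ j ∈ J, 1 ≤ j ∧ j ≤ n - 1 := by
      intro j hj; simpa only [Finset.mem_Icc] using hJ hj
    constructor
    · intro h; have := hJ' n h; omega
    · intro j hj
      rcases Finset.mem_insert.mp hj with h | h
      · subst h; simp only [Finset.mem_Icc]; omega
      · have := hJ' j h; simp only [Finset.mem_Icc]; omega
  -- sums over insert n J when 1 ∈ J
  have sumK1 : ∀ J : Finset ℕ, J ⊆ Finset.Icc 1 (n-1) → 1 ∈ J →
      ∑ j ∈ insert n J, L j = ∑ j ∈ insert n J, ℓ j := by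
    intro J hJ h1
    obtain ⟨hnJ, -⟩ := key J hJ
    have hJ' : ∀ j ∈ J, 1 ≤ j ∧ j ≤ n - 1 := by
      intro j hj; simpa only [Finset.mem_Icc] using hJ hj
    rw [Finset.sum_insert hnJ, Finset.sum_insert hnJ,
      ← Finset.add_sum_erase J L h1, ← Finset.add_sum_erase J ℓ h1,
      Finset.sum_congr rfl (fun j hj => hLmid j (Finset.ne_of_mem_erase hj)
        (by have := hJ' j (Finset.mem_of_mem_erase hj); omega)),
      hL1, hLn]
    ring
  -- sums over insert n J when 1 ∉ J
  have sumK0 : ∀ J : Finset ℕ, J ⊆ Finset.Icc 1 (n-1) → 1 ∉ J →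
      ∑ j ∈ insert n J, L j = ℓ n + ℓ 1 - ε + ∑ j ∈ J, ℓ j := by
    intro J hJ h1
    obtain ⟨hnJ, -⟩ := key J hJ
    have hJ' : ∀ j ∈ J, 1 ≤ j ∧ j ≤ n - 1 := by
      intro j hj; simpa only [Finset.mem_Icc] using hJ hj
    rw [Finset.sum_insert hnJ,
      Finset.sum_congr rfl (fun j hj => hLmid j (fun e => h1 (e ▸ hj))
        (by have := hJ' j hj; omega)),
      hLn]
  constructor
  · -- Sdot n L ⊆ Sdot n ℓ
    rintro J ⟨hJ, hshort⟩
    obtain ⟨hnJ, hK⟩ := key J hJ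
    refine ⟨hJ, ?_⟩
    rw [short_iff' n L _ hK, hLtot] at hshort
    rw [short_iff' n ℓ _ hK]
    by_cases h1 : 1 ∈ J
    · rw [← sumK1 J hJ h1]; exact hshort
    · rw [sumK0 J hJ h1] at hshort
      rw [Finset.sum_insert hnJ]
      linarith
  · -- the bijection statement
    intro J hJ
    obtain ⟨hnJ, hK⟩ := key J hJ
    have hJ' : ∀ j ∈ J, 1 ≤ j ∧ j ≤ n - 1 := by
      intro j hj; simpa only [Finset.mem_Icc] using hJ hj
    by_cases h1 : 1 ∈ J
    · -- both sides false
      constructor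
      · rintro ⟨hs, hns⟩
        exfalso; apply hns
        rw [short_iff' n L _ hK, hLtot, sumK1 J hJ h1]
        rw [short_iff' n ℓ _ hK] at hs
        exact hs
      · rintro ⟨hsub, -, -⟩
        have := hsub h1
        simp only [Finset.mem_Icc] at this
        omega
    · -- main case : 1 ∉ J
      have hJ2 : J ⊆ Finset.Icc 2 (n-1) := by
        intro j hj
        have := hJ' j hj
        have hj1 : j ≠ 1 := fun e => h1 (e ▸ hj)
        simp only [Finset.mem_Icc]; omega
      have h1K : 1 ∉ insert n J := by
        simp only [Finset.mem_insert]; push_neg; exact ⟨hn1, h1⟩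
      set S := ∑ j ∈ Finset.Icc 1 n, ℓ j with hSdef
      set s2 := ∑ j ∈ Finset.Icc 2 (n-1), ℓ j with hs2def
      set a := ∑ j ∈ J, ℓ j with hadef
      have hS : S = ℓ 1 + ℓ n + s2 := by rw [hSdef, sum_split ℓ]
      -- Short n ℓ (insert n J)
      have hKshort : Short n ℓ (insert n J) ↔ (ℓ n + a) + (ℓ n + a) < S := by
        rw [short_iff' n ℓ _ hK, Finset.sum_insert hnJ]
      -- ¬ Short n L (insert n J) via hεsmall
      have hKe : (insert n J).erase 1 = insert n J := Finset.erase_eq_of_notMem h1K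
      have himg : (insert n J).image (fun i => i - 1)
          = insert (n-1) (J.image (fun i => i - 1)) := Finset.image_insert _ _ _
      have hMn : (n-1) ∉ J.image (fun i => i - 1) := by
        simp only [Finset.mem_image]
        rintro ⟨j, hj, hje⟩
        have := hJ' j hj
        have := hJ2 hj
        simp only [Finset.mem_Icc] at this
        omega
      have hinj : ∀ x ∈ J, ∀ y ∈ J, x - 1 = y - 1 → x = y := by
        intro x hx y hy h
        have := hJ' x hx; have := hJ' y hy; omega
      have hsumimg : ∑ j ∈ J.image (fun i => i - 1),
          (fun j => if j = n-1 then ℓ n + ℓ 1 else ℓ (j+1)) j = a := by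
        rw [Finset.sum_image hinj]
        apply Finset.sum_congr rfl
        intro j hj
        have hb := hJ2 hj
        simp only [Finset.mem_Icc] at hb
        have h1' : j - 1 ≠ n - 1 := by omega
        have h2' : j - 1 + 1 = j := by omega
        simp only [h1', if_false, h2']
      have hM : ∑ j ∈ insert (n-1) (J.image (fun i => i - 1)),
          (fun j => if j = n-1 then ℓ n + ℓ 1 else ℓ (j+1)) j = ℓ n + ℓ 1 + a := by
        rw [Finset.sum_insert hMn, hsumimg]
        simp
      have hMsub : insert (n-1) (J.image (fun i => i - 1)) ⊆ Finset.Icc 1 (n-1) := by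
        intro j hj
        rcases Finset.mem_insert.mp hj with h | h
        · subst h; simp only [Finset.mem_Icc]; omega
        · simp only [Finset.mem_image] at h
          obtain ⟨x, hx, hxe⟩ := h
          have hb := hJ2 hx
          simp only [Finset.mem_Icc] at hb ⊢
          omega
      have hIcc2 : Finset.Icc 1 (n-1) = insert (n-1) (Finset.Icc 1 (n-2)) := by
        ext j; simp only [Finset.mem_Icc, Finset.mem_insert]; omega
      have hn1notin : n - 1 ∉ Finset.Icc 1 (n-2) := by
        simp only [Finset.mem_Icc]; omega
      have hreindex : s2 = ∑ j ∈ Finset.Icc 1 (n-2), ℓ (j+1) := by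
        rw [hs2def]
        have himg2 : (Finset.Icc 1 (n-2)).image (fun i => i + 1) = Finset.Icc 2 (n-1) := by
          ext j
          simp only [Finset.mem_image, Finset.mem_Icc]
          constructor
          · rintro ⟨x, hx, rfl⟩; omega
          · intro h; exact ⟨j - 1, by omega, by omega⟩
        rw [← himg2, Finset.sum_image (fun x _ y _ h => by omega)]
      have hS' : ∑ j ∈ Finset.Icc 1 (n-1),
          (fun j => if j = n-1 then ℓ n + ℓ 1 else ℓ (j+1)) j = S := by
        rw [hIcc2, Finset.sum_insert hn1notin, hS, hreindex]
        have : ∑ j ∈ Finset.Icc 1 (n-2),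
            (fun j => if j = n-1 then ℓ n + ℓ 1 else ℓ (j+1)) j
            = ∑ j ∈ Finset.Icc 1 (n-2), ℓ (j+1) := by
          apply Finset.sum_congr rfl
          intro j hj
          simp only [Finset.mem_Icc] at hj
          have : j ≠ n - 1 := by omega
          simp only [this, if_false]
        rw [this]
        simp only [if_true, ite_true, eq_self_iff_true]
        ring
      have hLK : Short n L (insert n J) ↔ (ℓ n + ℓ 1 + a) + (ℓ n + ℓ 1 + a) < S := by
        rw [hεsmall _ hK, hKe, himg, short_iff' (n-1) _ _ hMsub, hM, hS']
      have hgenK : (ℓ n + ℓ 1 + a) + (ℓ n + ℓ 1 + a) ≠ S := by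
        have h1K' : insert 1 (insert n J) ⊆ Finset.Icc 1 n := by
          apply Finset.insert_subset _ hK
          simp only [Finset.mem_Icc]; omega
        have hg := hgen _ h1K'
        rw [Finset.sum_sdiff_eq_sub h1K', Finset.sum_insert h1K, Finset.sum_insert hnJ] at hg
        intro h; apply hg
        rw [← hSdef]; linarith
      -- Short n ℓ C and the Long condition
      have hCsub : Finset.Icc 2 (n-1) \ J ⊆ Finset.Icc 1 n := by
        intro j hj
        have := Finset.mem_sdiff.mp hj
        simp only [Finset.mem_Icc] at this ⊢
        omega
      have hCsum : ∑ j ∈ Finset.Icc 2 (n-1) \ J, ℓ j = s2 - a :=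
        Finset.sum_sdiff_eq_sub hJ2
      have hCshort : Short n ℓ (Finset.Icc 2 (n-1) \ J) ↔ (s2 - a) + (s2 - a) < S := by
        rw [short_iff' n ℓ _ hCsub, hCsum]
      have hlongset : Finset.Icc 1 n \ insert 1 (Finset.Icc 2 (n-1) \ J) = insert n J := by
        ext j
        simp only [Finset.mem_sdiff, Finset.mem_insert, Finset.mem_Icc, not_or, not_and,
          Finset.mem_sdiff, not_not]
        constructor
        · rintro ⟨⟨hj1, hjn⟩, hne1, himp⟩
          by_cases hmem : j ∈ J
          · exact Or.inr hmem
          · left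
            by_cases hcase : 2 ≤ j ∧ j ≤ n - 1
            · exact absurd (himp ⟨hcase.1, hcase.2⟩) hmem
            · omega
        · rintro (hje | hmem)
          · refine ⟨⟨by omega, by omega⟩, by omega, ?_⟩
            rintro ⟨-, h2⟩
            exfalso; omega
          · have := hJ' j hmem
            have hj1 : j ≠ 1 := fun e => h1 (e ▸ hmem)
            exact ⟨⟨by omega, by omega⟩, hj1, fun _ => hmem⟩
      have hLong : Long n ℓ (insert 1 (Finset.Icc 2 (n-1) \ J)) ↔ Short n ℓ (insert n J) := by
        unfold Long; rw [hlongset]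
      rw [hKshort, hLK, hCshort, hLong, hKshort]
      constructor
      · rintro ⟨hs, hns⟩
        refine ⟨hJ2, ?_, hs⟩
        rcases lt_or_eq_of_le (not_lt.mp hns) with h | h
        · linarith [hS]
        · exact absurd h.symm hgenK
      · rintro ⟨-, hc, hk⟩
        refine ⟨hk, ?_⟩
        intro hcon
        rw [hS] at hc hcon
        linarith
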